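/- Let ε = ε(n) with 0 ≤ ε < 1/2 and ω(n) → ∞, and set t = n^{1−ε}/ω(n) and m = ⌈(1−2ε)·log₂ n⌉. Then the probability that a uniformly random configuration of t pebbles on F_{m,n} is solvable (indeed, even v_1-solvable) tends to 0 as n → ∞. -/

import Mathlib

/-- A single pebbling step on a graph `G`: remove two pebbles from a vertex `u`
and place one pebble on a neighbor `v` of `u`. -/
def PebStep {V : Type*} [DecidableEq V] (G : SimpleGraph V) (C C' : V → ℕ) : Prop :=
  ∃ u v : V, G.Adj u v ∧ 2 ≤ C u ∧
    C' = fun w => if w = u then C u - 2 else if w = v then C w + 1 else C w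

/-- The fuse graph `F_{m,n}` on vertices `v_1, …, v_n` (0-indexed as `Fin n`):
a path `v_1 — v_2 — ⋯ — v_m` together with pendant vertices `v_{m+1}, …, v_n`
each adjacent to `v_m`. -/
def fuse (n m : ℕ) : SimpleGraph (Fin n) :=
  SimpleGraph.fromRel (fun i j =>
    (i.val + 1 = j.val ∧ j.val ≤ m - 1) ∨ (m ≤ j.val ∧ i.val = m - 1))


open Filter

namespace Stmt16
open Finset

variable {n m : ℕ}

def phi (m : ℕ) (v : Fin n) (k : ℕ) : ℕ := if v.val < m then k * 2^(m - 1 - v.val) else k / 2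

def Phi (m : ℕ) (C : Fin n → ℕ) : ℕ := ∑ v, phi m v (C v)

lemma sum_pair {f g : Fin n → ℕ} (u v : Fin n) (huv : u ≠ v)
    (h : ∀ w, w ≠ u → w ≠ v → f w = g w) (h2 : f u + f v ≤ g u + g v) :
    ∑ w, f w ≤ ∑ w, g w := by
  classical
  have hsplit : ∀ h : Fin n → ℕ, ∑ w, h w = h u + h v + ∑ w ∈ (univ.erase u).erase v, h w := by
    intro h
    rw [← Finset.sum_erase_add _ _ (Finset.mem_univ u)]
    rw [← Finset.sum_erase_add _ _ (Finset.mem_erase.2 ⟨Ne.symm huv, Finset.mem_univ v⟩)]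
    ring
  rw [hsplit f, hsplit g]
  have : ∑ w ∈ (univ.erase u).erase v, f w = ∑ w ∈ (univ.erase u).erase v, g w := by
    apply Finset.sum_congr rfl
    intro w hw
    simp only [Finset.mem_erase] at hw
    exact h w hw.2.1 hw.1
  omega

lemma phi_step (hm : 1 ≤ m) {C C' : Fin n → ℕ} (h : PebStep (fuse n m) C C') :
    Phi m C' ≤ Phi m C := by
  obtain ⟨u, v, hadj, hCu, hC'⟩ := h
  rw [fuse, SimpleGraph.fromRel_adj] at hadj
  obtain ⟨huv, hrel⟩ := hadj
  subst hC'
  apply sum_pair u v huv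
  · intro w hwu hwv
    simp [hwu, hwv]
  · simp only [if_pos rfl, if_neg (Ne.symm huv), if_pos rfl, if_true]
    unfold phi
    obtain ⟨c, hc⟩ := Nat.le.dest hCu
    rw [← hc]
    have hc2 : 2 + c - 2 = c := by omega
    rw [hc2]
    rcases hrel with (⟨h1, h2⟩ | ⟨h1, h2⟩) | (⟨h1, h2⟩ | ⟨h1, h2⟩)
    · have hv : v.val < m := by omega
      have hu : u.val < m := by omega
      rw [if_pos hu, if_pos hv, if_pos hu, if_pos hv]
      have hB : (2:ℕ)^(m - 1 - v.val) ≤ 2^(m-1-u.val) :=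
        Nat.pow_le_pow_right (by norm_num) (by omega)
      calc c * 2^(m-1-u.val) + (C v + 1) * 2^(m-1-v.val)
          = c * 2^(m-1-u.val) + C v * 2^(m-1-v.val) + 2^(m-1-v.val) := by ring
        _ ≤ c * 2^(m-1-u.val) + C v * 2^(m-1-v.val) + 2 * 2^(m-1-u.val) := by
            have : (2:ℕ)^(m-1-v.val) ≤ 2 * 2^(m-1-u.val) :=
              le_trans hB (Nat.le_mul_of_pos_left _ (by norm_num))
            omega
        _ = (2 + c) * 2^(m-1-u.val) + C v * 2^(m-1-v.val) := by ring
    · have hu : u.val < m := by omega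
      have hv : ¬ v.val < m := by omega
      rw [if_pos hu, if_neg hv, if_pos hu, if_neg hv]
      have h0 : m - 1 - u.val = 0 := by omega
      rw [h0]
      simp only [pow_zero, mul_one]
      omega
    · have hu : u.val < m := by omega
      have hv : v.val < m := by omega
      rw [if_pos hu, if_pos hv, if_pos hu, if_pos hv]
      have he : m - 1 - v.val = (m - 1 - u.val) + 1 := by omega
      rw [he, pow_succ]
      exact le_of_eq (by ring)
    · have hu : ¬ u.val < m := by omega
      have hv : v.val < m := by omega
      rw [if_neg hu, if_pos hv, if_neg hu, if_pos hv]
      have h0 : m - 1 - v.val = 0 := by omega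
      rw [h0]
      simp only [pow_zero, mul_one]
      omega

lemma phi_rtg (hm : 1 ≤ m) {C C' : Fin n → ℕ}
    (h : Relation.ReflTransGen (PebStep (fuse n m)) C C') : Phi m C' ≤ Phi m C := by
  induction h with
  | refl => exact le_refl _
  | tail _ hstep ih => exact le_trans (phi_step hm hstep) ih


lemma solvable_lb (hm : 1 ≤ m) (hn : 0 < n) {C : Fin n → ℕ}
    (h : ∃ C', Relation.ReflTransGen (PebStep (fuse n m)) C C' ∧
      ∀ v : Fin n, v.val = 0 → 1 ≤ C' v) :
    2^(m-1) ≤ Phi m C := by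
  obtain ⟨C', hrtg, hone⟩ := h
  refine le_trans ?_ (phi_rtg hm hrtg)
  set v1 : Fin n := ⟨0, hn⟩
  have h1 : 1 ≤ C' v1 := hone v1 rfl
  calc (2:ℕ)^(m-1) ≤ phi m v1 (C' v1) := by
        unfold phi
        rw [if_pos (show (v1:ℕ) < m by show 0 < m; omega)]
        calc (2:ℕ)^(m-1) = 1 * 2^(m-1) := (one_mul _).symm
          _ ≤ C' v1 * 2^(m-1-(v1:ℕ)) := by
              apply Nat.mul_le_mul h1
              simp [v1]
    _ ≤ Phi m C' :=
        Finset.single_le_sum (f := fun v => phi m v (C' v)) (fun v _ => Nat.zero_le _)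
          (Finset.mem_univ v1)


lemma card_count_ge (t k : ℕ) (hk : k ≤ t) (v : Fin n) :
    Nat.card {C : Sym (Fin n) t // k ≤ Multiset.count v (C : Multiset (Fin n))} =
      (n + (t - k) - 1).choose (t - k) := by
  classical
  have e : {C : Sym (Fin n) t // k ≤ Multiset.count v (C : Multiset (Fin n))} ≃
      Sym (Fin n) (t - k) :=
  { toFun := fun C => ⟨(C.1 : Multiset (Fin n)) - Multiset.replicate k v, by
      have hle : Multiset.replicate k v ≤ (C.1 : Multiset (Fin n)) :=
        (Multiset.le_count_iff_replicate_le).1 C.2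
      have hc : Multiset.card (C.1 : Multiset (Fin n)) = t := C.1.2
      rw [Multiset.card_sub hle, Multiset.card_replicate, hc]⟩
    invFun := fun D => ⟨⟨(D : Multiset (Fin n)) + Multiset.replicate k v, by
        have hd : Multiset.card (D : Multiset (Fin n)) = t - k := D.2
        rw [Multiset.card_add, Multiset.card_replicate, hd]; omega⟩, by
      show k ≤ Multiset.count v ((D : Multiset (Fin n)) + Multiset.replicate k v)
      simp only [Multiset.count_add, Multiset.count_replicate_self]
      omega⟩
    left_inv := fun C => by
      apply Subtype.ext; apply Subtype.ext
      exact tsub_add_cancel_of_le ((Multiset.le_count_iff_replicate_le).1 C.2)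
    right_inv := fun D => by
      apply Subtype.ext
      show (D : Multiset (Fin n)) + Multiset.replicate k v - Multiset.replicate k v = _
      simp }
  rw [Nat.card_congr e, Nat.card_eq_fintype_card, Sym.card_sym_eq_choose,
    Fintype.card_fin]

lemma layer_cake {α : Type*} [Fintype α] (f : α → ℕ) (B : ℕ) (hf : ∀ a, f a ≤ B) :
    ∑ a, f a = ∑ k ∈ Finset.range B, Nat.card {a // k < f a} := by
  classical
  have hcard : ∀ k, Nat.card {a // k < f a} =
      (Finset.univ.filter (fun a => k < f a)).card := fun k => by
    rw [Nat.card_eq_fintype_card, Fintype.card_subtype]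
  simp_rw [hcard, Finset.card_filter]
  rw [Finset.sum_comm]
  apply Finset.sum_congr rfl
  intro a _
  have hfil : Finset.filter (fun k => k < f a) (Finset.range B) = Finset.range (f a) := by
    ext k
    simp only [Finset.mem_filter, Finset.mem_range]
    have := hf a
    omega
  rw [← Finset.card_filter, hfil, Finset.card_range]

lemma hockey (a T : ℕ) : ∑ s ∈ Finset.range (T+1), (a+s).choose s = (a+T+1).choose T := by
  induction T with
  | zero => simp
  | succ T ih =>
    rw [Finset.sum_range_succ, ih]
    have h2 : a + (T+1) = a + T + 1 := by ring
    rw [h2]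
    exact (Nat.choose_succ_succ _ _).symm

lemma geom0 (m : ℕ) : ∑ i ∈ Finset.range m, (2:ℕ)^i = 2^m - 1 := by
  induction m with
  | zero => simp
  | succ m ih =>
    rw [Finset.sum_range_succ, ih]
    have := Nat.one_le_two_pow (n := m)
    have h2 : (2:ℕ)^(m+1) = 2^m + 2^m := by rw [pow_succ]; ring
    omega

lemma geom (m : ℕ) : ∑ i ∈ Finset.range m, 2^(m-1-i) = 2^m - 1 := by
  rw [Finset.sum_range_reflect (fun i => (2:ℕ)^i) m, geom0]


lemma S1_eq (t : ℕ) (v : Fin n) (hn : 1 ≤ n) (ht : 1 ≤ t) :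
    ∑ C : Sym (Fin n) t, Multiset.count v (C : Multiset (Fin n)) =
      (n + t - 1).choose (t - 1) := by
  obtain ⟨a, rfl⟩ : ∃ a, n = a + 1 := ⟨n - 1, by omega⟩
  obtain ⟨T, rfl⟩ : ∃ T, t = T + 1 := ⟨t - 1, by omega⟩
  rw [layer_cake _ (T+1) (fun C => by
    have h1 := Multiset.count_le_card v (C : Multiset (Fin (a+1)))
    have h2 : Multiset.card (C : Multiset (Fin (a+1))) = T + 1 := C.2
    omega)]
  have h1 : ∀ k ∈ Finset.range (T+1),
      Nat.card {C : Sym (Fin (a+1)) (T+1) // k < Multiset.count v (C : Multiset (Fin (a+1)))} =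
        (a + (T - k)).choose (T - k) := by
    intro k hk
    simp only [Finset.mem_range] at hk
    have h := card_count_ge (T+1) (k+1) (by omega) v
    have h2 : ∀ C : Sym (Fin (a+1)) (T+1),
        (k < Multiset.count v (C : Multiset (Fin (a+1)))) ↔
        (k+1 ≤ Multiset.count v (C : Multiset (Fin (a+1)))) := fun C => Iff.rfl
    rw [Nat.card_congr (Equiv.subtypeEquivRight h2), h]
    congr 1 <;> omega
  rw [Finset.sum_congr rfl h1]
  have h3 : ∀ k ∈ Finset.range (T+1),
      (a + (T - k)).choose (T - k) = (fun s => (a+s).choose s) (T + 1 - 1 - k) := by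
    intro k hk
    simp only [Finset.mem_range] at hk
    simp only []
    congr 1 <;> omega
  rw [Finset.sum_congr rfl h3, Finset.sum_range_reflect (fun s => (a+s).choose s) (T+1),
    hockey]
  congr 1 <;> omega

lemma S2_le (t : ℕ) (v : Fin n) (hn : 1 ≤ n) (ht : 1 ≤ t) :
    ∑ C : Sym (Fin n) t, (Multiset.count v (C : Multiset (Fin n))) / 2 ≤
      (n + t - 1).choose (t - 1) - (n + t - 2).choose (t - 1) := by
  classical
  have hA : Nat.card {C : Sym (Fin n) t // 1 ≤ Multiset.count v (C : Multiset (Fin n))} =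
      (n + t - 2).choose (t - 1) := by
    rw [card_count_ge t 1 ht v]
    congr 1 <;> omega
  have key : ∑ C : Sym (Fin n) t, (Multiset.count v (C : Multiset (Fin n))) / 2 +
      Nat.card {C : Sym (Fin n) t // 1 ≤ Multiset.count v (C : Multiset (Fin n))} ≤
      ∑ C : Sym (Fin n) t, Multiset.count v (C : Multiset (Fin n)) := by
    rw [Nat.card_eq_fintype_card, Fintype.card_subtype, Finset.card_filter,
      ← Finset.sum_add_distrib]
    apply Finset.sum_le_sum
    intro C _
    split_ifs with h <;> omega
  rw [S1_eq t v hn ht] at key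
  omega

lemma sum_Phi_le (hn : 1 ≤ n) {t : ℕ} (ht : 1 ≤ t) :
    ∑ C : Sym (Fin n) t, Phi m (fun v => Multiset.count v (C : Multiset (Fin n))) ≤
      2^m * (n + t - 1).choose (t - 1) +
        n * ((n + t - 1).choose (t - 1) - (n + t - 2).choose (t - 1)) := by
  classical
  set S1 := (n + t - 1).choose (t - 1) with hS1
  set A1 := (n + t - 2).choose (t - 1) with hA1
  unfold Phi
  rw [Finset.sum_comm]
  have hv : ∀ v : Fin n, ∑ C : Sym (Fin n) t, phi m v (Multiset.count v (C : Multiset (Fin n)))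
      ≤ if v.val < m then 2^(m-1-v.val) * S1 else S1 - A1 := by
    intro v
    unfold phi
    by_cases h : v.val < m
    · simp only [if_pos h]
      rw [← Finset.sum_mul, S1_eq t v hn ht, mul_comm]
    · simp only [if_neg h]
      exact S2_le t v hn ht
  calc ∑ v : Fin n, ∑ C : Sym (Fin n) t, phi m v (Multiset.count v (C : Multiset (Fin n)))
      ≤ ∑ v : Fin n, (if v.val < m then 2^(m-1-v.val) * S1 else S1 - A1) :=
        Finset.sum_le_sum (fun v _ => hv v)
    _ = ∑ i ∈ Finset.range n, (if i < m then 2^(m-1-i) * S1 else S1 - A1) :=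
        Fin.sum_univ_eq_sum_range (fun i => if i < m then 2^(m-1-i) * S1 else S1 - A1) n
    _ ≤ ∑ i ∈ Finset.range n, ((if i < m then 2^(m-1-i) else 0) * S1 + (S1 - A1)) := by
        apply Finset.sum_le_sum
        intro i _
        split_ifs <;> simp <;> omega
    _ = (∑ i ∈ Finset.range n, (if i < m then 2^(m-1-i) else 0)) * S1 + n * (S1 - A1) := by
        rw [Finset.sum_add_distrib, Finset.sum_const, Finset.card_range, Finset.sum_mul,
          smul_eq_mul]
    _ ≤ 2^m * S1 + n * (S1 - A1) := by
        have hle : ∑ i ∈ Finset.range n, (if i < m then 2^(m-1-i) else 0) ≤ 2^m := by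
          rw [← Finset.sum_filter]
          have hsub : (Finset.range n).filter (fun i => i < m) ⊆ Finset.range m := by
            intro i hi
            simp only [Finset.mem_filter, Finset.mem_range] at hi ⊢
            omega
          calc ∑ i ∈ (Finset.range n).filter (fun i => i < m), 2^(m-1-i)
              ≤ ∑ i ∈ Finset.range m, 2^(m-1-i) := Finset.sum_le_sum_of_subset hsub
            _ = 2^m - 1 := geom m
            _ ≤ 2^m := Nat.sub_le _ _
        exact Nat.add_le_add_right (mul_le_mul_left hle S1) _

lemma markov {t : ℕ} (P : Sym (Fin n) t → Prop) (b : ℕ)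
    (hP : ∀ C, P C → b ≤ Phi m (fun v => Multiset.count v (C : Multiset (Fin n)))) :
    Nat.card {C : Sym (Fin n) t // P C} * b ≤
      ∑ C : Sym (Fin n) t, Phi m (fun v => Multiset.count v (C : Multiset (Fin n))) := by
  classical
  rw [Nat.card_eq_fintype_card, Fintype.card_subtype]
  calc (Finset.univ.filter P).card * b = ∑ _C ∈ Finset.univ.filter P, b := by
        rw [Finset.sum_const, smul_eq_mul]
    _ ≤ ∑ C ∈ Finset.univ.filter P, Phi m (fun v => Multiset.count v (C : Multiset (Fin n))) :=
        Finset.sum_le_sum (fun C hC => hP C (Finset.mem_filter.1 hC).2)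
    _ ≤ _ := Finset.sum_le_sum_of_subset (Finset.filter_subset _ _)


set_option maxHeartbeats 1000000 in
lemma ratio_bound (hn : 1 ≤ n) (hm : 1 ≤ m) {t : ℕ} (ht : 1 ≤ t) {K : ℕ}
    (h1 : K * 2^(m-1) ≤ 2^m * (n+t-1).choose (t-1) +
      n * ((n+t-1).choose (t-1) - (n+t-2).choose (t-1))) :
    (K : ℝ) / ((n + t - 1).choose t : ℝ) ≤
      2*(t:ℝ)/(n:ℝ) + 2*(t:ℝ)^2/((n:ℝ) * 2^m) := by
  set S1 := (n + t - 1).choose (t - 1) with hS1def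
  set A1 := (n + t - 2).choose (t - 1) with hA1def
  set N := (n + t - 1).choose t with hNdef
  -- nat identities
  have h2 : S1 * n = N * t := by
    have h := Nat.choose_succ_right_eq (n + t - 1) (t - 1)
    have e1 : t - 1 + 1 = t := by omega
    have e2 : n + t - 1 - (t - 1) = n := by omega
    rw [e1, e2] at h
    exact h.symm
  have h3 : A1 * (n + t - 1) = N * t := by
    have h := Nat.add_one_mul_choose_eq (n + t - 2) (t - 1)
    have e2 : t - 1 + 1 = t := by omega
    have e3 : n + t - 2 + 1 = n + t - 1 := by omega
    rw [e3, e2] at h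
    rw [mul_comm]
    exact h
  have h4 : A1 ≤ S1 := by
    have hA : A1 * n ≤ A1 * (n + t - 1) := Nat.mul_le_mul_left _ (by omega)
    rw [h3, ← h2] at hA
    exact Nat.le_of_mul_le_mul_right hA (by omega)
  have h5 : 0 < N := Nat.choose_pos (by omega)
  -- real versions
  have ha : (1:ℝ) ≤ (n:ℝ) := by exact_mod_cast hn
  have hb : (1:ℝ) ≤ (t:ℝ) := by exact_mod_cast ht
  have hNr : (0:ℝ) < (N:ℝ) := by exact_mod_cast h5
  have he : (0:ℝ) < (2:ℝ)^(m-1) := by positivity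
  have hab : ((n + t - 1 : ℕ) : ℝ) = (n:ℝ) + (t:ℝ) - 1 := by
    rw [Nat.cast_sub (by omega)]; push_cast; ring
  have h2R : (S1:ℝ) * (n:ℝ) = (N:ℝ) * (t:ℝ) := by exact_mod_cast h2
  have h3R : (A1:ℝ) * ((n:ℝ) + (t:ℝ) - 1) = (N:ℝ) * (t:ℝ) := by
    rw [← hab]; exact_mod_cast h3
  have hDR : ((S1 - A1 : ℕ) : ℝ) = (S1:ℝ) - (A1:ℝ) := by
    rw [Nat.cast_sub h4]
  have hMe : (2:ℝ)^m = 2 * 2^(m-1) := by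
    rw [← pow_succ']
    congr 1
    omega
  have h1R : (K:ℝ) * 2^(m-1) ≤ 2^m * (S1:ℝ) + (n:ℝ) * ((S1:ℝ) - (A1:ℝ)) := by
    rw [← hDR]
    exact_mod_cast h1
  have han : (0:ℝ) < (n:ℝ) := by linarith
  have hanb : (0:ℝ) < (n:ℝ) + (t:ℝ) - 1 := by linarith
  have hS : (S1:ℝ) = (N:ℝ) * (t:ℝ) / (n:ℝ) := (eq_div_iff (by linarith)).2 h2R
  have hA : (A1:ℝ) = (N:ℝ) * (t:ℝ) / ((n:ℝ) + (t:ℝ) - 1) := (eq_div_iff (by linarith)).2 h3R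
  rw [div_le_iff₀ hNr]
  have h1' : (K:ℝ) ≤ (2^m * (S1:ℝ) + (n:ℝ) * ((S1:ℝ) - (A1:ℝ))) / 2^(m-1) := by
    rw [le_div_iff₀ he]
    linarith
  refine h1'.trans ?_
  rw [div_le_iff₀ he, hS, hA, hMe]
  have hid : (2*(t:ℝ)/(n:ℝ) + 2*(t:ℝ)^2/((n:ℝ)*(2*2^(m-1)))) * (N:ℝ) * 2^(m-1)
      - (2*2^(m-1) * ((N:ℝ)*(t:ℝ)/(n:ℝ))
        + (n:ℝ)*((N:ℝ)*(t:ℝ)/(n:ℝ) - (N:ℝ)*(t:ℝ)/((n:ℝ)+(t:ℝ)-1)))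
      = ((N:ℝ)*(t:ℝ)*((t:ℝ)^2 - (t:ℝ) + (n:ℝ))) / ((n:ℝ)*((n:ℝ)+(t:ℝ)-1)) := by
    field_simp
    ring
  have hQ : (0:ℝ) ≤ ((N:ℝ)*(t:ℝ)*((t:ℝ)^2 - (t:ℝ) + (n:ℝ))) / ((n:ℝ)*((n:ℝ)+(t:ℝ)-1)) := by
    apply div_nonneg _ (by positivity)
    have h6 : (0:ℝ) ≤ (t:ℝ)^2 - (t:ℝ) + (n:ℝ) := by nlinarith
    exact mul_nonneg (mul_nonneg hNr.le (by linarith)) h6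
  linarith [hid, hQ]

end Stmt16

open Filter

/-- Let `ε = ε(n)` with `0 ≤ ε < 1/2`, let `ω(n) → ∞`, and set
`t = n^{1−ε}/ω(n)` and `m = ⌈(1−2ε)·log₂ n⌉`.  Then the probability that a uniformly random
configuration of `t` pebbles on `F_{m,n}` is `v_1`-solvable (hence solvable) tends to `0`.
(`v_1` is the vertex of index `0`, encoded by the condition `v.val = 0`.) -/
theorem stmt16 (ε : ℕ → ℝ) (hε : ∀ n, 0 ≤ ε n ∧ ε n < 1 / 2)
    (ω : ℕ → ℝ) (hω : Tendsto ω atTop atTop)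
    (t : ℕ → ℕ) (ht : ∀ n, (t n : ℝ) = (n : ℝ) ^ (1 - ε n) / ω n)
    (m : ℕ → ℕ) (hm : ∀ n, m n = ⌈(1 - 2 * ε n) * Real.logb 2 n⌉₊) :
    Tendsto (fun n =>
      (Nat.card {C : Sym (Fin n) (t n) //
          ∃ C', Relation.ReflTransGen (PebStep (fuse n (m n)))
            (fun v => Multiset.count v (C : Multiset (Fin n))) C' ∧
            ∀ v : Fin n, v.val = 0 → 1 ≤ C' v} : ℝ)
        / ((n + t n - 1).choose (t n) : ℝ)) atTop (nhds 0) := by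
  have hg : Tendsto (fun n => 2 / ω n + 2 / (ω n * ω n)) atTop (nhds 0) := by
    have t1 : Tendsto (fun n => 2 / ω n) atTop (nhds 0) :=
      Tendsto.div_atTop tendsto_const_nhds hω
    have t2 : Tendsto (fun n => 2 / (ω n * ω n)) atTop (nhds 0) :=
      Tendsto.div_atTop tendsto_const_nhds (hω.atTop_mul_atTop₀ hω)
    simpa using t1.add t2
  apply squeeze_zero' ?_ ?_ hg
  · filter_upwards with n
    exact div_nonneg (Nat.cast_nonneg _) (Nat.cast_nonneg _)
  · filter_upwards [hω.eventually_ge_atTop 1, eventually_ge_atTop 2] with n hω1 hn2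
    obtain ⟨hε0, hε2⟩ := hε n
    have hn1 : 1 ≤ n := by omega
    have hnR : (2:ℝ) ≤ (n:ℝ) := by exact_mod_cast hn2
    have hnpos : (0:ℝ) < (n:ℝ) := by linarith
    have hωpos : (0:ℝ) < ω n := by linarith
    have htpos : (0:ℝ) < (t n : ℝ) := by
      rw [ht n]
      positivity
    have ht1 : 1 ≤ t n := by
      by_contra h
      have h0 : t n = 0 := by omega
      rw [h0] at htpos
      simp at htpos
    have hm1 : 1 ≤ m n := by
      rw [hm n]
      apply Nat.ceil_pos.2
      exact mul_pos (by linarith) (Real.logb_pos (by norm_num) (by linarith))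
    -- Markov + counting
    have hK : Nat.card {C : Sym (Fin n) (t n) //
          ∃ C', Relation.ReflTransGen (PebStep (fuse n (m n)))
            (fun v => Multiset.count v (C : Multiset (Fin n))) C' ∧
            ∀ v : Fin n, v.val = 0 → 1 ≤ C' v} * 2^(m n - 1) ≤
        2^(m n) * (n + t n - 1).choose (t n - 1) +
          n * ((n + t n - 1).choose (t n - 1) - (n + t n - 2).choose (t n - 1)) :=
      le_trans (Stmt16.markov _ _ (fun C hC => Stmt16.solvable_lb hm1 (by omega) hC))
        (Stmt16.sum_Phi_le hn1 ht1)
    refine le_trans (Stmt16.ratio_bound hn1 hm1 ht1 hK) ?_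
    -- real estimates
    have htω : (t n : ℝ) * ω n = (n:ℝ) ^ (1 - ε n) := by
      rw [ht n]
      field_simp
    have hle : (n:ℝ) ^ (1 - ε n) ≤ (n:ℝ) := by
      calc (n:ℝ) ^ (1 - ε n) ≤ (n:ℝ) ^ (1:ℝ) :=
            Real.rpow_le_rpow_of_exponent_le (by linarith) (by linarith)
        _ = (n:ℝ) := Real.rpow_one _
    have key1 : 2*(t n:ℝ)/(n:ℝ) ≤ 2/ω n := by
      rw [div_le_div_iff₀ hnpos hωpos]
      nlinarith
    have h2m : (n:ℝ) ^ (1 - 2*ε n) ≤ 2^(m n) := by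
      have e1 : (2:ℝ) ^ (Real.logb 2 n * (1 - 2*ε n)) = (n:ℝ) ^ (1 - 2*ε n) := by
        rw [Real.rpow_mul (by norm_num), Real.rpow_logb (by norm_num) (by norm_num) hnpos]
      calc (n:ℝ) ^ (1 - 2*ε n) = (2:ℝ) ^ (Real.logb 2 n * (1 - 2*ε n)) := e1.symm
        _ ≤ (2:ℝ) ^ ((m n : ℕ) : ℝ) := by
            apply Real.rpow_le_rpow_of_exponent_le one_le_two
            rw [hm n, mul_comm]
            exact Nat.le_ceil _
        _ = (2:ℝ) ^ (m n) := Real.rpow_natCast 2 (m n)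
    have ht2 : (t n:ℝ)^2 * (ω n * ω n) = (n:ℝ)^(1 - ε n) * (n:ℝ)^(1 - ε n) := by
      rw [ht n]
      field_simp
    have hsplit : (n:ℝ)^(1 - ε n) * (n:ℝ)^(1 - ε n) = (n:ℝ) * (n:ℝ)^(1 - 2*ε n) := by
      rw [← Real.rpow_add hnpos]
      nth_rewrite 2 [show (n:ℝ) = (n:ℝ)^(1:ℝ) from (Real.rpow_one _).symm]
      rw [← Real.rpow_add hnpos]
      congr 1
      ring
    have key2 : 2*(t n:ℝ)^2/((n:ℝ) * 2^(m n)) ≤ 2/(ω n * ω n) := by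
      rw [div_le_div_iff₀ (by positivity) (by positivity)]
      have hfin : (t n:ℝ)^2 * (ω n * ω n) ≤ (n:ℝ) * 2^(m n) := by
        rw [ht2, hsplit]
        exact mul_le_mul_of_nonneg_left h2m (by positivity)
      nlinarith
    linarith [key1, key2]
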